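/- Let L ≥ 1 be an integer and define G(ω) = Σ_{k=0}^{L} cos(π(k/L − 1/2)) e^{2πi k ω}. Then L·(2/π − 1/L) ≤ G(0) ≤ L·(2/π + 1/L). -/

import Mathlib

open scoped Real
open Finset

/-- `G(ω) = Σ_{k=0}^{L} cos(π(k/L − 1/2)) e^{2πi k ω}`. -/
noncomputable def Gfun (L : ℕ) (ω : ℝ) : ℂ :=
  ∑ k ∈ Finset.range (L + 1),
    (Real.cos (Real.pi * ((k : ℝ) / L - 1 / 2)) : ℂ) *
      Complex.exp (2 * Real.pi * Complex.I * (k : ℂ) * (ω : ℂ))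

lemma Gfun_zero (L : ℕ) :
    Gfun L 0 = ((∑ k ∈ Finset.range (L + 1), Real.sin (Real.pi * k / L) : ℝ) : ℂ) := by
  unfold Gfun
  rw [Complex.ofReal_sum]
  refine Finset.sum_congr rfl fun k _ => ?_
  rw [Complex.ofReal_zero, mul_zero, Complex.exp_zero, mul_one]
  rw [Complex.ofReal_inj.2 (show Real.cos (Real.pi * ((k : ℝ) / L - 1 / 2)) =
    Real.sin (Real.pi * k / L) from ?_)]
  rw [mul_sub, show Real.pi * (1/2) = Real.pi/2 by ring,
    show Real.pi * ((k:ℝ)/L) - Real.pi/2 = -(Real.pi/2 - Real.pi * k / L) by ring,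
    Real.cos_neg, Real.cos_pi_div_two_sub, mul_div_assoc]

lemma sum_sin_eq (L : ℕ) (hL : 1 ≤ L) :
    (∑ k ∈ Finset.range (L + 1), Real.sin (Real.pi * k / L)) *
      (2 * Real.sin (Real.pi / (2 * L))) = 2 * Real.cos (Real.pi / (2 * L)) := by
  set x := Real.pi / (2 * L) with hx
  have hL0 : (L : ℝ) ≠ 0 := by positivity
  have key : ∀ k ∈ Finset.range (L + 1),
      Real.sin (Real.pi * k / L) * (2 * Real.sin x) =
      Real.cos ((2 * (k : ℝ) - 1) * x) - Real.cos ((2 * ((k : ℝ) + 1) - 1) * x) := by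
    intro k _
    rw [Real.cos_sub_cos]
    have h1 : ((2 * (k : ℝ) - 1) * x + (2 * ((k : ℝ) + 1) - 1) * x) / 2 = 2 * k * x := by ring
    have h2 : ((2 * (k : ℝ) - 1) * x - (2 * ((k : ℝ) + 1) - 1) * x) / 2 = -x := by ring
    rw [h1, h2, Real.sin_neg]
    have h3 : 2 * (k : ℝ) * x = Real.pi * k / L := by
      rw [hx]; field_simp
    rw [h3]; ring
  have hsum : ∀ k ∈ Finset.range (L + 1),
      Real.sin (Real.pi * k / L) * (2 * Real.sin x) =
      (fun k : ℕ => Real.cos ((2 * (k : ℝ) - 1) * x)) k -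
      (fun k : ℕ => Real.cos ((2 * (k : ℝ) - 1) * x)) (k + 1) := by
    intro k hk
    simpa using key k hk
  rw [Finset.sum_mul, Finset.sum_congr rfl hsum,
    Finset.sum_range_sub' (fun k : ℕ => Real.cos ((2 * (k : ℝ) - 1) * x))]
  have h4 : (2 * ((0:ℕ) : ℝ) - 1) * x = -x := by push_cast; ring
  have h5 : (2 * ((L + 1 : ℕ) : ℝ) - 1) * x = Real.pi + x := by
    push_cast; rw [hx]; field_simp; ring
  rw [h4, h5, Real.cos_neg, Real.cos_add]
  simp
  ring

lemma cot_bounds {x : ℝ} (hx0 : 0 < x) (hxle : x ≤ Real.pi / 2) :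
    1 / x - x / 2 ≤ Real.cos x / Real.sin x ∧ Real.cos x / Real.sin x ≤ 1 / x := by
  have hπ := Real.pi_pos
  have hsin : 0 < Real.sin x := Real.sin_pos_of_pos_of_lt_pi hx0 (by linarith)
  have hcos0 : 0 ≤ Real.cos x := Real.cos_nonneg_of_mem_Icc ⟨by linarith, hxle⟩
  constructor
  · have hcos : 1 - x ^ 2 / 2 ≤ Real.cos x := Real.one_sub_sq_div_two_le_cos
    have hsinle : Real.sin x ≤ x := Real.sin_le hx0.le
    have h1 : Real.cos x / x ≤ Real.cos x / Real.sin x :=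
      div_le_div_of_nonneg_left hcos0 hsin hsinle
    have h2 : 1 / x - x / 2 ≤ Real.cos x / x := by
      rw [le_div_iff₀ hx0]
      have hid : (1 / x - x / 2) * x = 1 - x ^ 2 / 2 := by field_simp
      linarith
    linarith
  · rcases eq_or_lt_of_le hxle with h | h
    · rw [h, Real.cos_pi_div_two, zero_div]
      positivity
    · have htan := Real.lt_tan hx0 h
      rw [Real.tan_eq_sin_div_cos] at htan
      have hcos : 0 < Real.cos x := Real.cos_pos_of_mem_Ioo ⟨by linarith, h⟩
      rw [lt_div_iff₀ hcos] at htan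
      rw [div_le_div_iff₀ hsin hx0]
      nlinarith

theorem stmt6 (L : ℕ) (hL : 1 ≤ L) :
    (Gfun L 0).im = 0 ∧
    (L : ℝ) * (2 / Real.pi - 1 / L) ≤ (Gfun L 0).re ∧
    (Gfun L 0).re ≤ (L : ℝ) * (2 / Real.pi + 1 / L) := by
  rw [Gfun_zero]
  set S := ∑ k ∈ Finset.range (L + 1), Real.sin (Real.pi * k / L) with hS
  set x := Real.pi / (2 * L) with hx
  have hL0 : (0:ℝ) < L := by exact_mod_cast hL
  have hπ := Real.pi_pos
  have hx0 : 0 < x := by positivity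
  have hL1 : (1:ℝ) ≤ L := by exact_mod_cast hL
  have hxle : x ≤ Real.pi / 2 := by
    rw [hx, div_le_div_iff₀ (by positivity) (by positivity)]
    nlinarith
  have hsin : 0 < Real.sin x := Real.sin_pos_of_pos_of_lt_pi hx0 (by linarith)
  have hSeq : S = Real.cos x / Real.sin x := by
    have := sum_sin_eq L hL
    rw [← hx] at this
    field_simp
    linarith
  obtain ⟨hlo, hhi⟩ := cot_bounds hx0 hxle
  have hinv : 1 / x = 2 * L / Real.pi := by rw [hx]; field_simp
  have hxlt : x ≤ 2 := by linarith [Real.pi_lt_d2]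
  refine ⟨by simp, ?_, ?_⟩ <;> rw [Complex.ofReal_re, hSeq]
  · have : (L:ℝ) * (2 / Real.pi - 1 / L) = 2 * L / Real.pi - 1 := by
      field_simp
    rw [this]
    calc 2 * (L:ℝ) / Real.pi - 1 ≤ 1 / x - x / 2 := by rw [hinv]; linarith
      _ ≤ _ := hlo
  · have : (L:ℝ) * (2 / Real.pi + 1 / L) = 2 * L / Real.pi + 1 := by
      field_simp
    rw [this]
    calc Real.cos x / Real.sin x ≤ 1 / x := hhi
      _ ≤ 2 * L / Real.pi + 1 := by rw [hinv]; linarith
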